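/- For k ∈ ℤ define u_k = (2+√3)^k − (2−√3)^k. Let a, b be real numbers with a ≠ 0, let N ≥ 1, and assume u_n + u_{n-1}·a ≠ 0 for every 1 ≤ n ≤ N. Define sequences (A_n) and (B_n) by A_1 = a, B_1 = b; A_2 = −a/(4+a), B_2 = 4b/(4+a); and for 2 ≤ n ≤ N−1: A_{n+1} = −A_n/(4 + A_n/A_{n-1}) and B_{n+1} = [4·B_n + (A_n/A_{n-1})·B_{n-1}]/(4 + A_n/A_{n-1}). Then for every 1 ≤ n ≤ N these recursions are well defined (all denominators are nonzero, and A_n ≠ 0), and A_n = (−1)^{n-1}·u_1·a/(u_n + u_{n-1}·a), B_n = u_n·b/(u_n + u_{n-1}·a). -/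

import Mathlib

/-- The sequence `u_k = (2+√3)^k − (2−√3)^k`, indexed by the integers. -/
noncomputable def uSeq (k : ℤ) : ℝ :=
  (2 + Real.sqrt 3) ^ k - (2 - Real.sqrt 3) ^ k

lemma sqrt3_sq : Real.sqrt 3 ^ 2 = 3 := Real.sq_sqrt (by norm_num)

lemma sqrt3_lt_two : Real.sqrt 3 < 2 := by
  nlinarith [sqrt3_sq, Real.sqrt_nonneg 3]

lemma hp_ne : (2 + Real.sqrt 3 : ℝ) ≠ 0 := by
  have := Real.sqrt_nonneg 3; positivity

lemma hq_ne : (2 - Real.sqrt 3 : ℝ) ≠ 0 := by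
  have := sqrt3_lt_two; nlinarith

lemma pq_one : (2 + Real.sqrt 3 : ℝ) * (2 - Real.sqrt 3) = 1 := by
  linear_combination (-1 : ℝ) * sqrt3_sq

lemma hp_inv : (2 + Real.sqrt 3 : ℝ)⁻¹ = 2 - Real.sqrt 3 :=
  inv_eq_of_mul_eq_one_right pq_one

lemma hq_inv : (2 - Real.sqrt 3 : ℝ)⁻¹ = 2 + Real.sqrt 3 :=
  inv_eq_of_mul_eq_one_right (by linear_combination (-1:ℝ) * sqrt3_sq)

lemma uSeq_rec (k : ℤ) : uSeq (k + 1) = 4 * uSeq k - uSeq (k - 1) := by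
  unfold uSeq
  rw [zpow_add_one₀ hp_ne, zpow_add_one₀ hq_ne, zpow_sub_one₀ hp_ne, zpow_sub_one₀ hq_ne,
    hp_inv, hq_inv]
  ring

lemma uSeq_zero : uSeq 0 = 0 := by simp [uSeq]

lemma uSeq_one_ne : uSeq 1 ≠ 0 := by
  have h3 : (0:ℝ) < Real.sqrt 3 := Real.sqrt_pos.mpr (by norm_num)
  have : uSeq 1 = 2 * Real.sqrt 3 := by simp [uSeq]; ring
  rw [this]; positivity

lemma uSeq_two : uSeq 2 = 4 * uSeq 1 := by
  have h := uSeq_rec 1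
  norm_num [uSeq_zero] at h
  convert h using 2

noncomputable def Dz (a : ℝ) (k : ℤ) : ℝ := uSeq k + uSeq (k - 1) * a

lemma Dz_rec (a : ℝ) (k : ℤ) : Dz a (k + 1) = 4 * Dz a k - Dz a (k - 1) := by
  unfold Dz
  rw [show k + 1 - 1 = k by ring, show k - 1 - 1 = k - 2 by ring]
  have h1 := uSeq_rec k
  have h2 : uSeq k = 4 * uSeq (k - 1) - uSeq (k - 2) := by
    have h := uSeq_rec (k - 1)
    rw [show k - 1 + 1 = k by ring, show k - 1 - 1 = k - 2 by ring] at h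
    exact h
  linear_combination h1 + a * h2


/-- **Closed form of the forward extension coefficients in the uniform-per-patch
case.** With base values `A_1 = a ≠ 0`, `B_1 = b` and the stated recursions,
all denominators are nonzero, `A_n ≠ 0`, and
`A_n = (−1)^{n-1} u_1 a/(u_n + u_{n-1} a)`, `B_n = u_n b/(u_n + u_{n-1} a)`
for every `1 ≤ n ≤ N`. -/
theorem forward_coefficients_closed_form
    (a b : ℝ) (ha : a ≠ 0) (N : ℕ) (hN : 1 ≤ N)
    (hden : ∀ n : ℕ, 1 ≤ n → n ≤ N → uSeq (n : ℤ) + uSeq ((n : ℤ) - 1) * a ≠ 0)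
    (A B : ℕ → ℝ)
    (hA1 : A 1 = a) (hB1 : B 1 = b)
    (hA2 : 2 ≤ N → A 2 = -a / (4 + a))
    (hB2 : 2 ≤ N → B 2 = 4 * b / (4 + a))
    (hArec : ∀ n : ℕ, 2 ≤ n → n ≤ N - 1 →
      A (n + 1) = -A n / (4 + A n / A (n - 1)))
    (hBrec : ∀ n : ℕ, 2 ≤ n → n ≤ N - 1 →
      B (n + 1) = (4 * B n + (A n / A (n - 1)) * B (n - 1)) / (4 + A n / A (n - 1))) :
    (2 ≤ N → 4 + a ≠ 0) ∧
    (∀ n : ℕ, 2 ≤ n → n ≤ N - 1 → 4 + A n / A (n - 1) ≠ 0) ∧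
    (∀ n : ℕ, 1 ≤ n → n ≤ N →
      A n ≠ 0 ∧
      A n = (-1 : ℝ) ^ (n - 1) * uSeq 1 * a / (uSeq (n : ℤ) + uSeq ((n : ℤ) - 1) * a) ∧
      B n = uSeq (n : ℤ) * b / (uSeq (n : ℤ) + uSeq ((n : ℤ) - 1) * a)) := by
  have hu1 := uSeq_one_ne
  have hD : ∀ n : ℕ, 1 ≤ n → n ≤ N → Dz a (n : ℤ) ≠ 0 := by
    intro n h1 h2; exact hden n h1 h2
  have hDz1 : Dz a 1 = uSeq 1 := by unfold Dz; norm_num [uSeq_zero]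
  have hDz2 : Dz a 2 = uSeq 1 * (4 + a) := by
    unfold Dz; norm_num [uSeq_two]; ring
  have h4a : 2 ≤ N → (4:ℝ) + a ≠ 0 := by
    intro h2N h0
    apply hD 2 (by norm_num) h2N
    rw [show ((2:ℕ):ℤ) = 2 by norm_num, hDz2, h0, mul_zero]
  have key : ∀ n : ℕ, 1 ≤ n → n ≤ N →
      A n = (-1:ℝ)^(n-1) * uSeq 1 * a / Dz a (n : ℤ) ∧
      B n = uSeq (n : ℤ) * b / Dz a (n : ℤ) := by
    intro n
    induction n using Nat.strong_induction_on with
    | _ n ih =>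
      match n with
      | 0 => intro h; omega
      | 1 =>
        intro _ _
        rw [show ((1:ℕ):ℤ) = 1 by norm_num, hDz1, hA1, hB1]
        constructor
        · field_simp; norm_num
        · field_simp
      | 2 =>
        intro _ h2N
        have h4 := h4a h2N
        rw [show ((2:ℕ):ℤ) = 2 by norm_num, hDz2, hA2 h2N, hB2 h2N, uSeq_two]
        constructor
        · field_simp; ring
        · field_simp
      | (m+3) =>
        intro _ h3N
        have hm2N : m + 2 ≤ N := by omega
        have hm1N : m + 1 ≤ N := by omega
        obtain ⟨IA2, IB2⟩ := ih (m+2) (by omega) (by omega) hm2N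
        obtain ⟨IA1, IB1⟩ := ih (m+1) (by omega) (by omega) hm1N
        have hD1 := hD (m+1) (by omega) hm1N
        have hD2 := hD (m+2) (by omega) hm2N
        have hD3 := hD (m+3) (by omega) h3N
        push_cast at IA2 IB2 IA1 IB1 hD1 hD2 hD3 ⊢
        try simp only [show m+3-1 = m+2 by omega, show m+2-1 = m+1 by omega,
          show m+1-1 = m by omega] at IA2 IA1 ⊢
        have hrec : Dz a ((m:ℤ)+3) = 4 * Dz a ((m:ℤ)+2) - Dz a ((m:ℤ)+1) := by
          have h := Dz_rec a ((m:ℤ)+2)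
          rw [show (m:ℤ)+2+1 = (m:ℤ)+3 by ring, show (m:ℤ)+2-1 = (m:ℤ)+1 by ring] at h
          exact h
        have hurec : uSeq ((m:ℤ)+3) = 4 * uSeq ((m:ℤ)+2) - uSeq ((m:ℤ)+1) := by
          have h := uSeq_rec ((m:ℤ)+2)
          rw [show (m:ℤ)+2+1 = (m:ℤ)+3 by ring, show (m:ℤ)+2-1 = (m:ℤ)+1 by ring] at h
          exact h
        have he : ((-1:ℝ))^m ≠ 0 := pow_ne_zero _ (by norm_num)
        have hAr := hArec (m+2) (by omega) (by omega)
        have hBr := hBrec (m+2) (by omega) (by omega)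
        simp only [show m+2+1 = m+3 by omega, show m+2-1 = m+1 by omega] at hAr hBr
        have hratio : A (m+2) / A (m+1) = -Dz a ((m:ℤ)+1) / Dz a ((m:ℤ)+2) := by
          rw [IA2, IA1, pow_succ]
          field_simp
        have h4 : 4 + A (m+2) / A (m+1) = Dz a ((m:ℤ)+3) / Dz a ((m:ℤ)+2) := by
          rw [hratio, hrec]
          field_simp
          ring
        rw [hrec] at hD3
        constructor
        · rw [hAr, h4, hrec, IA2, pow_succ, pow_succ, pow_succ]
          field_simp
          try ring
        · rw [hBr, h4, hratio, hrec, hurec, IB2, IB1]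
          field_simp
          ring
  refine ⟨h4a, ?_, ?_⟩
  · intro n h2 hn1
    obtain ⟨m, rfl⟩ : ∃ m, n = m + 2 := ⟨n - 2, by omega⟩
    have hm2N : m + 2 ≤ N := by omega
    have hm1N : m + 1 ≤ N := by omega
    have hm3N : m + 3 ≤ N := by omega
    obtain ⟨IA2, _⟩ := key (m+2) (by omega) hm2N
    obtain ⟨IA1, _⟩ := key (m+1) (by omega) hm1N
    have hD1 := hD (m+1) (by omega) hm1N
    have hD2 := hD (m+2) (by omega) hm2N
    have hD3 := hD (m+3) (by omega) hm3N
    push_cast at IA2 IA1 hD1 hD2 hD3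
    try simp only [show m+2-1 = m+1 by omega, show m+1-1 = m by omega] at IA2 IA1 ⊢
    have hrec : Dz a ((m:ℤ)+3) = 4 * Dz a ((m:ℤ)+2) - Dz a ((m:ℤ)+1) := by
      have h := Dz_rec a ((m:ℤ)+2)
      rw [show (m:ℤ)+2+1 = (m:ℤ)+3 by ring, show (m:ℤ)+2-1 = (m:ℤ)+1 by ring] at h
      exact h
    have he : ((-1:ℝ))^m ≠ 0 := pow_ne_zero _ (by norm_num)
    have hratio : A (m+2) / A (m+1) = -Dz a ((m:ℤ)+1) / Dz a ((m:ℤ)+2) := by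
      rw [IA2, IA1, pow_succ]
      field_simp
    have h4 : 4 + A (m+2) / A (m+1) = Dz a ((m:ℤ)+3) / Dz a ((m:ℤ)+2) := by
      rw [hratio, hrec]
      field_simp
      ring
    rw [h4]
    exact div_ne_zero hD3 hD2
  · intro n h1 hn
    obtain ⟨hAn, hBn⟩ := key n h1 hn
    have hDn := hD n h1 hn
    have hne : A n ≠ 0 := by
      rw [hAn]
      exact div_ne_zero (mul_ne_zero (mul_ne_zero (pow_ne_zero _ (by norm_num)) hu1) ha) hDn
    exact ⟨hne, hAn, hBn⟩
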